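/- arXiv:1810.10207 — 7 statements merged into one kernel-verified Lean document; each statement's English description precedes it below -/
import Mathlib

section
/- Let φ : ℝ^m → ℝ be a convex function whose subgradients are uniformly bounded in norm by M, and let g : ℝ^p → ℝ^m be a smooth map satisfying ‖g(x) − g(x') − ∇g(x')(x − x')‖ ≤ (L/2)‖x − x'‖² for all x,x'. Then the composition φ∘g is (LM)-weakly convex: φ(g(x)) ≥ φ(g(x')) + ⟨∇φ(g(x'))ᵀ∇g(x'), x − x'⟩ − (LM/2)‖x − x'‖² for all x, x' and any subgradient ∇φ(g(x')) of φ at g(x'). -/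
open RealInnerProductSpace

/-- If `φ` is convex with subgradients bounded by `M` and `g` is a smooth map, then
`φ ∘ g` is `(L M)`-weakly convex. -/
theorem stmt3 {E F' : Type*} [NormedAddCommGroup E] [InnerProductSpace ℝ E]
    [NormedAddCommGroup F'] [InnerProductSpace ℝ F']
    (φ : F' → ℝ) (M L : ℝ) (hM : 0 ≤ M) (hL : 0 ≤ L)
    (Dφ : F' → F')
    (hconv : ∀ u v : F', φ v ≥ φ u + ⟪Dφ u, v - u⟫)
    (hbound : ∀ u : F', ‖Dφ u‖ ≤ M)
    (g : E → F') (Dg : E → E →L[ℝ] F')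
    (hsmooth : ∀ x x' : E, ‖g x - g x' - Dg x' (x - x')‖ ≤ L / 2 * ‖x - x'‖ ^ 2) :
    ∀ x x' : E,
      φ (g x) ≥ φ (g x') + ⟪Dφ (g x'), Dg x' (x - x')⟫ - L * M / 2 * ‖x - x'‖ ^ 2 := by
  intro x x'
  have h1 := hconv (g x') (g x)
  have hr : g x - g x' = Dg x' (x - x') + (g x - g x' - Dg x' (x - x')) := by abel
  rw [hr, inner_add_right] at h1
  have h2 : |⟪Dφ (g x'), g x - g x' - Dg x' (x - x')⟫| ≤ L * M / 2 * ‖x - x'‖ ^ 2 := by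
    calc |⟪Dφ (g x'), g x - g x' - Dg x' (x - x')⟫|
        ≤ ‖Dφ (g x')‖ * ‖g x - g x' - Dg x' (x - x')‖ := abs_real_inner_le_norm _ _
      _ ≤ M * (L / 2 * ‖x - x'‖ ^ 2) := by
          apply mul_le_mul (hbound _) (hsmooth x x') (norm_nonneg _) hM
      _ = L * M / 2 * ‖x - x'‖ ^ 2 := by ring
  have := neg_abs_le ⟪Dφ (g x'), g x - g x' - Dg x' (x - x')⟫
  linarith
end

section
/- Let φ : ℝ → ℝ be a non-decreasing L-smooth function, g : ℝ^p → ℝ be convex and G_x-Lipschitz. Then x ↦ φ(g(x) − c) is (L G_x²)-weakly convex for any constant c: φ(g(x) − c) ≥ φ(g(x') − c) + φ'(g(x') − c)⟨∇g(x'), x − x'⟩ − (L G_x²/2)‖x − x'‖² where ∇g(x') is any subgradient of g at x'. -/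
open RealInnerProductSpace

/-- If `φ : ℝ → ℝ` is non-decreasing and `L`-smooth, and `g` is convex and `Gx`-Lipschitz,
then `x ↦ φ(g(x) - c)` is `(L Gx²)`-weakly convex. -/
theorem stmt4 {E : Type*} [NormedAddCommGroup E] [InnerProductSpace ℝ E]
    (φ : ℝ → ℝ) (φ' : ℝ → ℝ) (L Gx : ℝ) (hL : 0 ≤ L)
    (hmono : Monotone φ)
    (hsmooth : ∀ a b : ℝ, φ a ≥ φ b + φ' b * (a - b) - L / 2 * |a - b| ^ 2)
    (g : E → ℝ) (dg : E → E)
    (hsubgrad : ∀ x x' : E, g x ≥ g x' + ⟪dg x', x - x'⟫)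
    (hlip : ∀ x x' : E, |g x - g x'| ≤ Gx * ‖x - x'‖)
    (c : ℝ) :
    ∀ x x' : E,
      φ (g x - c) ≥ φ (g x' - c) + φ' (g x' - c) * ⟪dg x', x - x'⟫
        - L * Gx ^ 2 / 2 * ‖x - x'‖ ^ 2 := by
  intro x x'
  -- φ' is nonnegative everywhere
  have hφ'pos : ∀ b : ℝ, 0 ≤ φ' b := by
    intro b
    by_contra h
    push_neg at h
    rcases eq_or_lt_of_le hL with hL0 | hL0
    · have := hsmooth (b - 1) b
      have hm : φ (b - 1) ≤ φ b := hmono (by linarith)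
      rw [← hL0] at this
      simp at this
      nlinarith
    · set t : ℝ := -φ' b / L with ht
      have htpos : 0 < t := div_pos (by linarith) hL0
      have hm : φ (b - t) ≤ φ b := hmono (by linarith)
      have hs := hsmooth (b - t) b
      have habs : |b - t - b| = t := by
        rw [show b - t - b = -t by ring, abs_neg, abs_of_pos htpos]
      rw [habs] at hs
      have ht2 : L * t = -φ' b := by rw [ht]; field_simp
      nlinarith [sq_nonneg t]
  set b := g x' - c with hb
  have key := hsmooth (g x - c) b
  have hdiff : g x - c - b = g x - g x' := by rw [hb]; ring
  rw [hdiff] at key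
  have h1 : φ' b * ⟪dg x', x - x'⟫ ≤ φ' b * (g x - g x') :=
    mul_le_mul_of_nonneg_left (by linarith [hsubgrad x x']) (hφ'pos b)
  have h2 : |g x - g x'| ^ 2 ≤ Gx ^ 2 * ‖x - x'‖ ^ 2 := by
    have := hlip x x'
    nlinarith [abs_nonneg (g x - g x'), norm_nonneg (x - x')]
  nlinarith
end

section
/- Let Z be a convex set, F be ρ-weakly monotone arising from a ρ-weakly-convex-weakly-concave f, fix 0 < γ < 1/ρ and w = (u,v) ∈ Z, and let w̄ = (ū, v̄) be the unique solution of the strongly monotone SVI defined by F_w^γ(z) = F(z) + (1/γ)(z − w). Then dist(0, ∂_x[f(ū,v̄) + 1_X(ū)] × ∂_y[−f(ū,v̄) + 1_Y(v̄)]) ≤ ‖w − w̄‖/γ. -/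
open RealInnerProductSpace Filter

/-- The Fréchet subdifferential of a real-valued function. -/
def fsub {E : Type*} [NormedAddCommGroup E] [InnerProductSpace ℝ E]
    (h : E → ℝ) (x : E) : Set E :=
  {v | ∀ ε > (0 : ℝ), ∀ᶠ y in nhds x, h y ≥ h x + ⟪v, y - x⟫ - ε * ‖y - x‖}

/-- The Fréchet subdifferential of an extended-real-valued function. -/
def fsubE {E : Type*} [NormedAddCommGroup E] [InnerProductSpace ℝ E]
    (h : E → EReal) (x : E) : Set E :=
  {v | ∀ ε > (0 : ℝ), ∀ᶠ y in nhds x,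
    h y ≥ h x + ((⟪v, y - x⟫ - ε * ‖y - x‖ : ℝ) : EReal)}

/-- The indicator function of a set, taking value `0` on the set and `+∞` outside. -/
noncomputable def ind {E : Type*} (X : Set E) (x : E) : EReal :=
  open Classical in if x ∈ X then 0 else ⊤

lemma aux_mem_fsubE {E : Type*} [NormedAddCommGroup E] [InnerProductSpace ℝ E]
    (h : E → ℝ) (X : Set E) (x : E) (hx : x ∈ X) (ξ ν : E)
    (hξ : ξ ∈ fsub h x) (hν : ∀ y ∈ X, ⟪ν, y - x⟫ ≤ 0) :
    ξ + ν ∈ fsubE (fun y => ((h y : ℝ) : EReal) + ind X y) x := by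
  intro ε hε
  filter_upwards [hξ ε hε] with y hy
  by_cases hyX : y ∈ X
  · simp only [ind, hx, hyX, if_true, add_zero]
    rw [← EReal.coe_add]
    have h2 := hν y hyX
    rw [inner_add_left] at *
    exact_mod_cast by linarith
  · simp [ind, hx, hyX]

/-- If `w̄ = (ū, v̄)` solves the strongly monotone SVI defined by
`F_w^γ(z) = F(z) + (1/γ)(z - w)`, then
`dist(0, ∂ₓ[f(ū,v̄) + 1_X(ū)] × ∂_y[-f(ū,v̄) + 1_Y(v̄)]) ≤ ‖w - w̄‖ / γ`. -/
theorem stmt5 {E G : Type*} [NormedAddCommGroup E] [InnerProductSpace ℝ E]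
    [NormedAddCommGroup G] [InnerProductSpace ℝ G]
    (X : Set E) (Y : Set G) (hXconv : Convex ℝ X) (hXcl : IsClosed X)
    (hYconv : Convex ℝ Y) (hYcl : IsClosed Y)
    (f : E → G → ℝ) (ρ : ℝ) (hρ : 0 < ρ)
    (hwc : ∀ y ∈ Y, ConvexOn ℝ X (fun x => f x y + ρ / 2 * ‖x‖ ^ 2))
    (hwcc : ∀ x ∈ X, ConcaveOn ℝ Y (fun y => f x y - ρ / 2 * ‖y‖ ^ 2))
    (γ : ℝ) (hγ0 : 0 < γ) (hγ : γ < 1 / ρ)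
    (u : E) (v : G) (hu : u ∈ X) (hv : v ∈ Y)
    (ub : E) (vb : G) (hub : ub ∈ X) (hvb : vb ∈ Y)
    (ξx : E) (ξy : G)
    (hξx : ξx ∈ fsub (fun x => f x vb) ub)
    (hξy : ξy ∈ fsub (fun y => -f ub y) vb)
    (hSVI : ∀ x ∈ X, ∀ y ∈ Y,
      ⟪ξx + (1 / γ) • (ub - u), x - ub⟫ + ⟪ξy + (1 / γ) • (vb - v), y - vb⟫ ≥ 0) :
    Real.sqrt
        ((Metric.infDist (0 : E)
            (fsubE (fun x => ((f x vb : ℝ) : EReal) + ind X x) ub)) ^ 2 +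
          (Metric.infDist (0 : G)
            (fsubE (fun y => ((-f ub y : ℝ) : EReal) + ind Y y) vb)) ^ 2)
      ≤ Real.sqrt (‖u - ub‖ ^ 2 + ‖v - vb‖ ^ 2) / γ := by
  have hSVIx : ∀ x ∈ X, ⟪ξx + (1 / γ) • (ub - u), x - ub⟫ ≥ 0 := by
    intro x hx
    have := hSVI x hx vb hvb
    simpa using this
  have hSVIy : ∀ y ∈ Y, ⟪ξy + (1 / γ) • (vb - v), y - vb⟫ ≥ 0 := by
    intro y hy
    have := hSVI ub hub y hy
    simpa using this
  have hmemx : ξx + -(ξx + (1 / γ) • (ub - u)) ∈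
      fsubE (fun x => ((f x vb : ℝ) : EReal) + ind X x) ub := by
    apply aux_mem_fsubE _ X ub hub _ _ hξx
    intro y hy
    rw [inner_neg_left]
    linarith [hSVIx y hy]
  have hmemy : ξy + -(ξy + (1 / γ) • (vb - v)) ∈
      fsubE (fun y => ((-f ub y : ℝ) : EReal) + ind Y y) vb := by
    apply aux_mem_fsubE _ Y vb hvb _ _ hξy
    intro y hy
    rw [inner_neg_left]
    linarith [hSVIy y hy]
  have ha : Metric.infDist (0 : E)
      (fsubE (fun x => ((f x vb : ℝ) : EReal) + ind X x) ub) ≤ ‖u - ub‖ / γ := by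
    refine (Metric.infDist_le_dist_of_mem hmemx).trans ?_
    rw [dist_zero_left]
    have : ξx + -(ξx + (1 / γ) • (ub - u)) = (1 / γ) • (u - ub) := by
      rw [smul_sub, smul_sub]; abel
    rw [this, norm_smul]
    simp [abs_of_pos hγ0, div_eq_mul_inv, mul_comm]
  have hb : Metric.infDist (0 : G)
      (fsubE (fun y => ((-f ub y : ℝ) : EReal) + ind Y y) vb) ≤ ‖v - vb‖ / γ := by
    refine (Metric.infDist_le_dist_of_mem hmemy).trans ?_
    rw [dist_zero_left]
    have : ξy + -(ξy + (1 / γ) • (vb - v)) = (1 / γ) • (v - vb) := by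
      rw [smul_sub, smul_sub]; abel
    rw [this, norm_smul]
    simp [abs_of_pos hγ0, div_eq_mul_inv, mul_comm]
  have key : Real.sqrt (‖u - ub‖ ^ 2 + ‖v - vb‖ ^ 2) / γ
      = Real.sqrt ((‖u - ub‖ / γ) ^ 2 + (‖v - vb‖ / γ) ^ 2) := by
    rw [div_pow, div_pow, ← add_div, Real.sqrt_div (by positivity),
      Real.sqrt_sq hγ0.le]
  rw [key]
  apply Real.sqrt_le_sqrt
  have h0a := Metric.infDist_nonneg (x := (0 : E))
      (s := fsubE (fun x => ((f x vb : ℝ) : EReal) + ind X x) ub)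
  have h0b := Metric.infDist_nonneg (x := (0 : G))
      (s := fsubE (fun y => ((-f ub y : ℝ) : EReal) + ind Y y) vb)
  have := sq_le_sq' (by linarith) ha
  have := sq_le_sq' (by linarith) hb
  nlinarith
end

section
/- Let F : Z → ℝ^d be a single-valued, monotone, L-Lipschitz continuous mapping on a compact convex set Z of diameter D, let w* be a solution of SVI(F,Z), and let ẑ ∈ Z be arbitrary. Define z̄ = Proj_Z(ẑ − η F(ẑ)) with η = 1/(√2 L). Then max_{z ∈ Z} ⟨F(z̄), z̄ − z⟩ ≤ D L (2 + √2) ‖ẑ − w*‖. -/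
open RealInnerProductSpace

/-- `p` is the Euclidean projection of `x` onto the convex set `Z`. -/
def IsProjOn {E : Type*} [NormedAddCommGroup E] [InnerProductSpace ℝ E]
    (Z : Set E) (x p : E) : Prop :=
  p ∈ Z ∧ ∀ z ∈ Z, ⟪x - p, z - p⟫ ≤ 0

/-- For a monotone `L`-Lipschitz mapping `F` on a compact convex set `Z` of diameter `D` with
SVI solution `w*`, the point `z̄ = Proj_Z(ẑ - ηF(ẑ))` with `η = 1/(√2 L)` satisfies
`max_{z∈Z} ⟨F(z̄), z̄ - z⟩ ≤ D L (2 + √2)‖ẑ - w*‖`. -/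
theorem stmt7 {E : Type*} [NormedAddCommGroup E] [InnerProductSpace ℝ E]
    (Z : Set E) (hZconv : Convex ℝ Z) (hZcomp : IsCompact Z)
    (D : ℝ) (hD : ∀ z ∈ Z, ∀ z' ∈ Z, ‖z - z'‖ ≤ D)
    (F : E → E) (L : ℝ) (hL : 0 < L)
    (hmono : ∀ z ∈ Z, ∀ z' ∈ Z, ⟪F z - F z', z - z'⟫ ≥ 0)
    (hlip : ∀ z ∈ Z, ∀ z' ∈ Z, ‖F z - F z'‖ ≤ L * ‖z - z'‖)
    (wstar : E) (hwstar : wstar ∈ Z)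
    (hSVI : ∀ z ∈ Z, ⟪F wstar, z - wstar⟫ ≥ 0)
    (zhat : E) (hzhat : zhat ∈ Z) (zbar : E)
    (hproj : IsProjOn Z (zhat - (1 / (Real.sqrt 2 * L)) • F zhat) zbar) :
    ∀ z ∈ Z, ⟪F zbar, zbar - z⟫ ≤ D * L * (2 + Real.sqrt 2) * ‖zhat - wstar‖ := by
  intro z hz
  obtain ⟨hzbarZ, H⟩ := hproj
  set s : ℝ := Real.sqrt 2 with hs_def
  have hs2 : s * s = 2 := Real.mul_self_sqrt (by norm_num)
  have hs0 : 0 ≤ s := Real.sqrt_nonneg 2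
  have hs1 : 1 ≤ s := by nlinarith
  have hsL : 0 < s * L := by positivity
  set a : ℝ := ‖zhat - zbar‖ with ha_def
  set b : ℝ := ‖wstar - zbar‖ with hb_def
  set c : ℝ := ‖zhat - wstar‖ with hc_def
  have ha : 0 ≤ a := norm_nonneg _
  have hb : 0 ≤ b := norm_nonneg _
  have hc : 0 ≤ c := norm_nonneg _
  have hD0 : 0 ≤ D := le_trans (norm_nonneg (wstar - wstar)) (hD wstar hwstar wstar hwstar)
  -- rewrite the projection inequality
  have Hexp : ∀ y ∈ Z,
      ⟪zhat - zbar, y - zbar⟫ - (1 / (s * L)) * ⟪F zhat, y - zbar⟫ ≤ 0 := by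
    intro y hy
    have h := H y hy
    rw [show zhat - (1 / (Real.sqrt 2 * L)) • F zhat - zbar
        = (zhat - zbar) - (1 / (s * L)) • F zhat by rw [hs_def]; abel] at h
    rwa [inner_sub_left, real_inner_smul_left] at h
  -- Step 1: ⟪zhat - zbar, wstar - zbar⟫ ≤ c*b/s
  have hstep1 : ⟪zhat - zbar, wstar - zbar⟫ ≤ (1 / (s * L)) * (L * (c * b)) := by
    have h1 := Hexp wstar hwstar
    have hm : ⟪F zhat, wstar - zbar⟫ ≤ L * (c * b) := by
      have e : ⟪F zhat, wstar - zbar⟫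
          = ⟪F zhat - F wstar, wstar - zbar⟫ + ⟪F wstar, wstar - zbar⟫ := by
        rw [inner_sub_left]; ring
      have h2 : ⟪F wstar, wstar - zbar⟫ ≤ 0 := by
        have h3 := hSVI zbar hzbarZ
        have h4 : ⟪F wstar, wstar - zbar⟫ = -⟪F wstar, zbar - wstar⟫ := by
          rw [← inner_neg_right]; congr 1; abel
        linarith
      have h5 : ⟪F zhat - F wstar, wstar - zbar⟫ ≤ ‖F zhat - F wstar‖ * b :=
        real_inner_le_norm _ _
      have h6 : ‖F zhat - F wstar‖ ≤ L * c := hlip zhat hzhat wstar hwstar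
      nlinarith
    have hpos : 0 < 1 / (s * L) := by positivity
    nlinarith
  -- polarization identity
  have hpol : ⟪zhat - zbar, wstar - zbar⟫ = (a ^ 2 + b ^ 2 - c ^ 2) / 2 := by
    have h := @norm_sub_sq_real E _ _ (zhat - zbar) (wstar - zbar)
    rw [show (zhat - zbar) - (wstar - zbar) = zhat - wstar by abel] at h
    rw [← hc_def, ← ha_def, ← hb_def] at h
    linarith
  -- Step 2: a ≤ s * c
  have hasc : a ≤ s * c := by
    have key : a ^ 2 + b ^ 2 - c ^ 2 ≤ s * (c * b) := by
      have heq : (1 / (s * L)) * (L * (c * b)) = (c * b) / s := by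
        field_simp
      rw [hpol, heq] at hstep1
      rw [div_le_div_iff₀ (by norm_num) (by positivity)] at hstep1
      nlinarith
    have ha2 : a ^ 2 ≤ (s * c) ^ 2 := by
      nlinarith [sq_nonneg (b - s * c / 2)]
    calc a = Real.sqrt (a ^ 2) := (Real.sqrt_sq ha).symm
      _ ≤ Real.sqrt ((s * c) ^ 2) := Real.sqrt_le_sqrt ha2
      _ = s * c := Real.sqrt_sq (by positivity)
  -- final bound for z
  have hzD : ‖zbar - z‖ ≤ D := hD zbar hzbarZ z hz
  have hfin1 : ⟪F zbar - F zhat, zbar - z⟫ ≤ L * a * D := by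
    have h5 : ⟪F zbar - F zhat, zbar - z⟫ ≤ ‖F zbar - F zhat‖ * ‖zbar - z‖ :=
      real_inner_le_norm _ _
    have h6 : ‖F zbar - F zhat‖ ≤ L * a := by
      have := hlip zbar hzbarZ zhat hzhat
      rwa [norm_sub_rev zbar zhat, ← ha_def] at this
    nlinarith [norm_nonneg (zbar - z), norm_nonneg (F zbar - F zhat)]
  have hfin2 : ⟪F zhat, zbar - z⟫ ≤ s * L * (a * D) := by
    have h1 := Hexp z hz
    have h2 : ⟪zhat - zbar, zbar - z⟫ ≤ a * D := by
      have h3 : ⟪zhat - zbar, zbar - z⟫ ≤ a * ‖zbar - z‖ := real_inner_le_norm _ _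
      nlinarith
    have h4 : ⟪zhat - zbar, z - zbar⟫ = -⟪zhat - zbar, zbar - z⟫ := by
      rw [← inner_neg_right]; congr 1; abel
    have h5 : ⟪F zhat, z - zbar⟫ = -⟪F zhat, zbar - z⟫ := by
      rw [← inner_neg_right]; congr 1; abel
    rw [h4, h5] at h1
    have h6 : s * L * (-⟪zhat - zbar, zbar - z⟫) ≤ -⟪F zhat, zbar - z⟫ := by
      have h7 : -⟪zhat - zbar, zbar - z⟫ ≤ (1 / (s * L)) * (-⟪F zhat, zbar - z⟫) := by
        linarith
      have h8 := mul_le_mul_of_nonneg_left h7 hsL.le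
      have h9 : s * L * ((1 / (s * L)) * (-⟪F zhat, zbar - z⟫))
          = -⟪F zhat, zbar - z⟫ := by
        field_simp
      linarith [h9 ▸ h8]
    nlinarith
  have hsplit : ⟪F zbar, zbar - z⟫
      = ⟪F zbar - F zhat, zbar - z⟫ + ⟪F zhat, zbar - z⟫ := by
    rw [inner_sub_left]; ring
  have hmul : (1 + s) * L * D * a ≤ (1 + s) * L * D * (s * c) :=
    mul_le_mul_of_nonneg_left hasc (by positivity)
  have hfinal : (1 + s) * L * D * (s * c) = D * L * (2 + s) * c := by
    have he : (1 + s) * L * D * (s * c) = (s * s) * (L * D * c) + s * (L * D * c) := by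
      ring
    rw [he, hs2]; ring
  calc ⟪F zbar, zbar - z⟫
      = ⟪F zbar - F zhat, zbar - z⟫ + ⟪F zhat, zbar - z⟫ := hsplit
    _ ≤ L * a * D + s * L * (a * D) := add_le_add hfin1 hfin2
    _ = (1 + s) * L * D * a := by ring
    _ ≤ (1 + s) * L * D * (s * c) := hmul
    _ = D * L * (2 + s) * c := hfinal
end

section
/- Let F : Z → ℝ^d be μ-strongly monotone and L-Lipschitz on a compact convex set Z of diameter D, with SVI solution w*. The projected gradient method with step size η = μ/(2L²) satisfies max_{z∈Z} ⟨F(z^{(T)}), z^{(T)} − z⟩ ≤ 4 D² L β exp(−(T−1)/(4β²)), where β = L/μ ≥ 1. -/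
open RealInnerProductSpace

set_option maxHeartbeats 1000000

/-- For a `μ`-strongly monotone `L`-Lipschitz mapping on a compact convex set of diameter `D`,
the projected gradient method with step size `η = μ/(2L²)` satisfies
`max_{z∈Z} ⟨F(z⁽ᵀ⁾), z⁽ᵀ⁾ - z⟩ ≤ 4D²Lβ exp(-(T-1)/(4β²))`, `β = L/μ ≥ 1`. -/
theorem stmt9 {E : Type*} [NormedAddCommGroup E] [InnerProductSpace ℝ E]
    (Z : Set E) (hZconv : Convex ℝ Z) (hZcomp : IsCompact Z)
    (D : ℝ) (hD : ∀ z ∈ Z, ∀ z' ∈ Z, ‖z - z'‖ ≤ D)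
    (F : E → E) (μ L : ℝ) (hμ : 0 < μ) (hL : 0 < L) (hβ : 1 ≤ L / μ)
    (hsm : ∀ z ∈ Z, ∀ z' ∈ Z, ⟪F z - F z', z - z'⟫ ≥ μ * ‖z - z'‖ ^ 2)
    (hlip : ∀ z ∈ Z, ∀ z' ∈ Z, ‖F z - F z'‖ ≤ L * ‖z - z'‖)
    (wstar : E) (hwstar : wstar ∈ Z)
    (hSVI : ∀ z ∈ Z, ⟪F wstar, z - wstar⟫ ≥ 0)
    (zs : ℕ → E) (hz0 : zs 0 ∈ Z)
    (hiter : ∀ t : ℕ, IsProjOn Z (zs t - (μ / (2 * L ^ 2)) • F (zs t)) (zs (t + 1)))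
    (T : ℕ) (hT : 1 ≤ T) :
    ∀ z ∈ Z, ⟪F (zs T), zs T - z⟫
      ≤ 4 * D ^ 2 * L * (L / μ) * Real.exp (-((T : ℝ) - 1) / (4 * (L / μ) ^ 2)) := by
  intro z hz
  have hμ0 : μ ≠ 0 := hμ.ne'
  have hL0 : L ≠ 0 := hL.ne'
  have hLμ : μ ≤ L := by
    have := (le_div_iff₀ hμ).mp hβ; linarith
  set η : ℝ := μ / (2 * L ^ 2) with hηdef
  have hηpos : 0 < η := by positivity
  have hmem : ∀ t, zs t ∈ Z := by
    intro t
    induction t with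
    | zero => exact hz0
    | succ n ih => exact (hiter n).1
  have hD0 : 0 ≤ D := le_trans (norm_nonneg _) (hD wstar hwstar wstar hwstar)
  set r : ℕ → ℝ := fun t => ‖zs t - wstar‖ with hrdef
  have hr0 : ∀ t, 0 ≤ r t := fun t => norm_nonneg _
  have hrD : ∀ t, r t ≤ D := fun t => hD _ (hmem t) _ hwstar
  set ρ : ℝ := 1 - 3 * μ ^ 2 / (4 * L ^ 2) with hρdef
  have hρ0 : 0 ≤ ρ := by
    have h1 : μ ^ 2 ≤ L ^ 2 := by nlinarith
    have h2 : 3 * μ ^ 2 / (4 * L ^ 2) ≤ 3 / 4 := by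
      rw [div_le_div_iff₀ (by positivity) (by norm_num)]
      nlinarith
    simp only [hρdef]; linarith
  -- contraction step
  have hcontr : ∀ t, r (t + 1) ^ 2 ≤ ρ * r t ^ 2 := by
    intro t
    set p : E := zs (t + 1) with hp
    set x : E := zs t - η • F (zs t) with hx
    set y : E := wstar - η • F wstar with hy
    have h1 : ⟪x - p, wstar - p⟫ ≤ 0 := (hiter t).2 wstar hwstar
    have h2 : (0:ℝ) ≤ ⟪F wstar, p - wstar⟫ := hSVI p (hmem (t + 1))
    have hkey : r (t + 1) ^ 2 ≤ ⟪x - y, p - wstar⟫ := by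
      have hsplit : x - y = (p - wstar) + (x - p) + (η • F wstar) := by
        simp only [hx, hy]; abel
      have e1 : ⟪x - y, p - wstar⟫
          = ⟪p - wstar, p - wstar⟫ + ⟪x - p, p - wstar⟫ + η * ⟪F wstar, p - wstar⟫ := by
        rw [hsplit, inner_add_left, inner_add_left, real_inner_smul_left]
      have e2 : ⟪x - p, p - wstar⟫ = -⟪x - p, wstar - p⟫ := by
        rw [← inner_neg_right]; congr 1; abel
      have hsq : r (t + 1) ^ 2 = ⟪p - wstar, p - wstar⟫ :=
        (real_inner_self_eq_norm_sq (p - wstar)).symm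
      have h3 : 0 ≤ η * ⟪F wstar, p - wstar⟫ := mul_nonneg hηpos.le h2
      linarith [e1, e2, hsq]
    have hCS : ⟪x - y, p - wstar⟫ ≤ ‖x - y‖ * r (t + 1) :=
      real_inner_le_norm _ _
    have hnorm : ‖x - y‖ ^ 2 ≤ ρ * r t ^ 2 := by
      have hxy : x - y = (zs t - wstar) - η • (F (zs t) - F wstar) := by
        simp only [hx, hy, smul_sub]; abel
      have hexp : ‖x - y‖ ^ 2 = r t ^ 2 - 2 * η * ⟪F (zs t) - F wstar, zs t - wstar⟫
          + η ^ 2 * ‖F (zs t) - F wstar‖ ^ 2 := by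
        rw [hxy, norm_sub_sq_real, real_inner_smul_right, norm_smul, mul_pow,
          Real.norm_eq_abs, abs_of_pos hηpos,
          real_inner_comm (zs t - wstar) (F (zs t) - F wstar)]
        simp only [hrdef]
        ring
      have hm := hsm (zs t) (hmem t) wstar hwstar
      have hl := hlip (zs t) (hmem t) wstar hwstar
      have hl2 : ‖F (zs t) - F wstar‖ ^ 2 ≤ L ^ 2 * r t ^ 2 := by
        have h4 := norm_nonneg (F (zs t) - F wstar)
        simp only [hrdef]
        nlinarith
      have hρval : r t ^ 2 - 2 * η * (μ * r t ^ 2) + η ^ 2 * (L ^ 2 * r t ^ 2)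
          = ρ * r t ^ 2 := by
        simp only [hηdef, hρdef]
        field_simp
        ring
      simp only [hrdef] at hm ⊢
      nlinarith [sq_nonneg η]
    nlinarith [hr0 (t + 1), norm_nonneg (x - y), sq_nonneg (r (t + 1) - ‖x - y‖)]
  -- geometric decay
  have hgeo : ∀ n, r (n + 1) ^ 2 ≤ ρ ^ n * r 1 ^ 2 := by
    intro n
    induction n with
    | zero => simp
    | succ n ih =>
      calc r (n + 2) ^ 2 ≤ ρ * r (n + 1) ^ 2 := hcontr (n + 1)
        _ ≤ ρ * (ρ ^ n * r 1 ^ 2) := mul_le_mul_of_nonneg_left ih hρ0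
        _ = ρ ^ (n + 1) * r 1 ^ 2 := by ring
  obtain ⟨k, rfl⟩ : ∃ k, T = k + 1 := ⟨T - 1, by omega⟩
  have hrT2 : r (k + 1) ^ 2 ≤ ρ ^ k * D ^ 2 := by
    have h1 : r 1 ^ 2 ≤ D ^ 2 := by nlinarith [hr0 1, hrD 1]
    have h2 := mul_le_mul_of_nonneg_left h1 (pow_nonneg hρ0 k)
    linarith [hgeo k]
  have hrT : r (k + 1) ≤ Real.sqrt (ρ ^ k) * D := by
    have h := Real.sqrt_le_sqrt hrT2
    rwa [Real.sqrt_sq (hr0 (k + 1)), Real.sqrt_mul (pow_nonneg hρ0 k),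
      Real.sqrt_sq hD0] at h
  -- exponential bound on sqrt(ρ^k)
  have hexpb : Real.sqrt (ρ ^ k) ≤ Real.exp (-(((k:ℝ) + 1) - 1) / (4 * (L / μ) ^ 2)) := by
    have hc : ρ ≤ Real.exp (-(3 * μ ^ 2 / (4 * L ^ 2))) := by
      have := Real.add_one_le_exp (-(3 * μ ^ 2 / (4 * L ^ 2)))
      simp only [hρdef]; linarith
    have hpow : ρ ^ k ≤ Real.exp (-(3 * μ ^ 2 / (4 * L ^ 2)) * k) := by
      calc ρ ^ k ≤ Real.exp (-(3 * μ ^ 2 / (4 * L ^ 2))) ^ k :=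
            pow_le_pow_left₀ hρ0 hc k
        _ = Real.exp (-(3 * μ ^ 2 / (4 * L ^ 2)) * k) := by
            rw [← Real.exp_nat_mul]; ring_nf
    have hsq2 : Real.exp (-(3 * μ ^ 2 / (4 * L ^ 2)) * k)
        = Real.exp (-(3 * μ ^ 2 / (4 * L ^ 2)) * k / 2) ^ 2 := by
      rw [← Real.exp_nat_mul]
      congr 1
      push_cast
      ring
    have hsqrt : Real.sqrt (ρ ^ k) ≤ Real.exp (-(3 * μ ^ 2 / (4 * L ^ 2)) * k / 2) := by
      have h := Real.sqrt_le_sqrt hpow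
      rwa [hsq2, Real.sqrt_sq (Real.exp_nonneg _)] at h
    refine hsqrt.trans (Real.exp_le_exp.mpr ?_)
    have hk0 : (0:ℝ) ≤ (k:ℝ) := Nat.cast_nonneg k
    have heq : -(((k:ℝ) + 1) - 1) / (4 * (L / μ) ^ 2) = -(μ ^ 2 * k / (4 * L ^ 2)) := by
      field_simp
      ring
    rw [heq, ← sub_nonpos]
    have e : -(3 * μ ^ 2 / (4 * L ^ 2)) * (k:ℝ) / 2 - -(μ ^ 2 * (k:ℝ) / (4 * L ^ 2))
        = -(μ ^ 2 * (k:ℝ) / (8 * L ^ 2)) := by field_simp; ring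
    rw [e, neg_nonpos]
    positivity
  -- gap decomposition
  set G : ℝ := ⟪F (zs (k + 1)), zs (k + 1) - z⟫ with hG
  have hdecomp : G = ⟪F (zs (k + 1)) - F wstar, zs (k + 1) - z⟫
      + ⟪F wstar - F (zs k), zs (k + 1) - wstar⟫
      + ⟪F (zs k), zs (k + 1) - wstar⟫
      + ⟪F wstar, wstar - z⟫ := by
    simp only [hG, inner_sub_left, inner_sub_right]
    ring
  have hA : ⟪F (zs (k + 1)) - F wstar, zs (k + 1) - z⟫ ≤ L * D * r (k + 1) := by
    calc ⟪F (zs (k + 1)) - F wstar, zs (k + 1) - z⟫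
        ≤ ‖F (zs (k + 1)) - F wstar‖ * ‖zs (k + 1) - z‖ := real_inner_le_norm _ _
      _ ≤ (L * r (k + 1)) * D :=
          mul_le_mul (hlip _ (hmem _) _ hwstar) (hD _ (hmem _) _ hz)
            (norm_nonneg _) (by positivity)
      _ = L * D * r (k + 1) := by ring
  have hB : ⟪F wstar - F (zs k), zs (k + 1) - wstar⟫ ≤ L * (r k * r (k + 1)) := by
    calc ⟪F wstar - F (zs k), zs (k + 1) - wstar⟫
        ≤ ‖F wstar - F (zs k)‖ * ‖zs (k + 1) - wstar‖ := real_inner_le_norm _ _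
      _ ≤ (L * ‖wstar - zs k‖) * r (k + 1) :=
          mul_le_mul_of_nonneg_right (hlip _ hwstar _ (hmem k)) (norm_nonneg _)
      _ = L * (r k * r (k + 1)) := by
          rw [norm_sub_rev]; simp only [hrdef]; ring
  have hC : ⟪F (zs k), zs (k + 1) - wstar⟫ ≤ (1 / η) * (r k * r (k + 1)) := by
    have hpr : ⟪(zs k - η • F (zs k)) - zs (k + 1), wstar - zs (k + 1)⟫ ≤ 0 :=
      (hiter k).2 wstar hwstar
    have hid : ⟪(zs k - η • F (zs k)) - zs (k + 1), wstar - zs (k + 1)⟫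
        = ⟪zs k - zs (k + 1), wstar - zs (k + 1)⟫
          - η * ⟪F (zs k), wstar - zs (k + 1)⟫ := by
      have hv : (zs k - η • F (zs k)) - zs (k + 1)
          = (zs k - zs (k + 1)) - η • F (zs k) := by abel
      rw [hv, inner_sub_left, real_inner_smul_left]
    have flip : ∀ a : E, ⟪a, wstar - zs (k + 1)⟫ = -⟪a, zs (k + 1) - wstar⟫ := by
      intro a; rw [← inner_neg_right]; congr 1; abel
    have h3 : η * ⟪F (zs k), zs (k + 1) - wstar⟫
        ≤ ⟪zs k - zs (k + 1), zs (k + 1) - wstar⟫ := by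
      rw [hid, flip, flip] at hpr
      linarith
    have h4 : ⟪zs k - zs (k + 1), zs (k + 1) - wstar⟫ ≤ r k * r (k + 1) := by
      have hid2 : ⟪zs k - zs (k + 1), zs (k + 1) - wstar⟫
          = ⟪zs k - wstar, zs (k + 1) - wstar⟫
            - ⟪zs (k + 1) - wstar, zs (k + 1) - wstar⟫ := by
        have hv2 : zs k - zs (k + 1) = (zs k - wstar) - (zs (k + 1) - wstar) := by abel
        rw [hv2, inner_sub_left]
      have hcs : ⟪zs k - wstar, zs (k + 1) - wstar⟫ ≤ r k * r (k + 1) :=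
        real_inner_le_norm _ _
      have hnn : (0:ℝ) ≤ ⟪zs (k + 1) - wstar, zs (k + 1) - wstar⟫ := real_inner_self_nonneg
      linarith
    have h5 := le_trans h3 h4
    rw [← sub_nonneg]
    have h6 : (1 / η) * (r k * r (k + 1)) - ⟪F (zs k), zs (k + 1) - wstar⟫
        = (1 / η) * (r k * r (k + 1) - η * ⟪F (zs k), zs (k + 1) - wstar⟫) := by
      field_simp
    rw [h6]
    exact mul_nonneg (by positivity) (by linarith)
  have hE : ⟪F wstar, wstar - z⟫ ≤ 0 := by
    have h7 := hSVI z hz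
    have hneg : ⟪F wstar, wstar - z⟫ = -⟪F wstar, z - wstar⟫ := by
      rw [← inner_neg_right]; congr 1; abel
    rw [hneg]; linarith
  -- combine
  have hcomb : G ≤ (2 * L + 1 / η) * (D * r (k + 1)) := by
    rw [hdecomp]
    have t0 : r k * r (k + 1) ≤ D * r (k + 1) :=
      mul_le_mul_of_nonneg_right (hrD k) (hr0 (k + 1))
    have t1 : L * (r k * r (k + 1)) ≤ L * (D * r (k + 1)) :=
      mul_le_mul_of_nonneg_left t0 hL.le
    have t2 : (1 / η) * (r k * r (k + 1)) ≤ (1 / η) * (D * r (k + 1)) :=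
      mul_le_mul_of_nonneg_left t0 (by positivity)
    nlinarith [hA, hB, hC, hE]
  have hηval : 1 / η = 2 * L * (L / μ) := by
    simp only [hηdef]; field_simp
  have hcoef : 2 * L + 1 / η ≤ 4 * L * (L / μ) := by
    rw [hηval]
    nlinarith
  calc G ≤ (2 * L + 1 / η) * (D * r (k + 1)) := hcomb
    _ ≤ (4 * L * (L / μ)) * (D * r (k + 1)) := by
        apply mul_le_mul_of_nonneg_right hcoef
        exact mul_nonneg hD0 (hr0 _)
    _ = 4 * L * (L / μ) * D * r (k + 1) := by ring
    _ ≤ 4 * L * (L / μ) * D * (Real.sqrt (ρ ^ k) * D) := by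
        apply mul_le_mul_of_nonneg_left (le_trans hrT le_rfl) (by positivity)
    _ ≤ 4 * L * (L / μ) * D *
        (Real.exp (-(((k:ℝ) + 1) - 1) / (4 * (L / μ) ^ 2)) * D) := by
        apply mul_le_mul_of_nonneg_left (mul_le_mul_of_nonneg_right hexpb hD0) (by positivity)
    _ = 4 * D ^ 2 * L * (L / μ) * Real.exp (-(((k + 1 : ℕ):ℝ) - 1) / (4 * (L / μ) ^ 2)) := by
        push_cast
        ring_nf
end

section
/- Let F : Z → ℝ^d be μ-strongly monotone and L-Lipschitz on a convex set Z. The extragradient iteration z^{(t)} = Proj_Z(w^{(t)} − η F(w^{(t)})), w^{(t+1)} = Proj_Z(w^{(t)} − η F(z^{(t)})) with η = 1/(4L) satisfies ‖w^{(t+1)} − w*‖² ≤ (1 − μ/(4L)) ‖w^{(t)} − w*‖², where w* is the unique solution of SVI(F,Z). -/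
open RealInnerProductSpace

lemma two_inner_aux {E : Type*} [NormedAddCommGroup E] [InnerProductSpace ℝ E]
    (x y : E) : 2 * ⟪x, y⟫ = ‖x‖ ^ 2 + ‖y‖ ^ 2 - ‖x - y‖ ^ 2 := by
  rw [@norm_sub_sq_real]; ring

set_option maxHeartbeats 1600000 in
/-- For a `μ`-strongly monotone `L`-Lipschitz mapping, the extragradient iteration with
`η = 1/(4L)` satisfies `‖w⁽ᵗ⁺¹⁾ - w*‖² ≤ (1 - μ/(4L))‖w⁽ᵗ⁾ - w*‖²`. -/
theorem stmt10 {E : Type*} [NormedAddCommGroup E] [InnerProductSpace ℝ E]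
    (Z : Set E) (hZ : Convex ℝ Z) (F : E → E)
    (μ L : ℝ) (hμ : 0 < μ) (hL : 0 < L)
    (hsm : ∀ z ∈ Z, ∀ z' ∈ Z, ⟪F z - F z', z - z'⟫ ≥ μ * ‖z - z'‖ ^ 2)
    (hlip : ∀ z ∈ Z, ∀ z' ∈ Z, ‖F z - F z'‖ ≤ L * ‖z - z'‖)
    (wstar : E) (hwstar : wstar ∈ Z)
    (hSVI : ∀ z ∈ Z, ⟪F wstar, z - wstar⟫ ≥ 0)
    (ws zs : ℕ → E) (hw0 : ws 0 ∈ Z)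
    (hiter1 : ∀ t : ℕ, IsProjOn Z (ws t - (1 / (4 * L)) • F (ws t)) (zs t))
    (hiter2 : ∀ t : ℕ, IsProjOn Z (ws t - (1 / (4 * L)) • F (zs t)) (ws (t + 1))) :
    ∀ t : ℕ, ‖ws (t + 1) - wstar‖ ^ 2 ≤ (1 - μ / (4 * L)) * ‖ws t - wstar‖ ^ 2 := by
  intro t
  have hLne : L ≠ 0 := ne_of_gt hL
  set η : ℝ := 1 / (4 * L) with hηdef
  have hη : 0 < η := by positivity
  have hwsZ : ∀ s, ws s ∈ Z := by
    intro s
    induction s with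
    | zero => exact hw0
    | succ n _ => exact (hiter2 n).1
  set w := ws t with hwdef
  set z := zs t with hzdef
  set w' := ws (t + 1) with hw'def
  have hzZ : z ∈ Z := (hiter1 t).1
  have hw'Z : w' ∈ Z := (hiter2 t).1
  have hwZ : w ∈ Z := hwsZ t
  by_cases hww : w = wstar
  · -- degenerate case : everything stays at wstar
    have hz_eq : z = wstar := by
      have h1 : ⟪(w - η • F w) - z, wstar - z⟫ ≤ 0 := (hiter1 t).2 wstar hwstar
      rw [hww, sub_right_comm, inner_sub_left, real_inner_smul_left,
        real_inner_self_eq_norm_sq] at h1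
      have h2 : (0:ℝ) ≤ ⟪F wstar, z - wstar⟫ := hSVI z hzZ
      have h3 : ⟪F wstar, wstar - z⟫ = -⟪F wstar, z - wstar⟫ := by
        rw [← inner_neg_right, neg_sub]
      have h4 : ‖wstar - z‖ ^ 2 ≤ 0 := by nlinarith
      have h5 : ‖wstar - z‖ = 0 := by nlinarith [norm_nonneg (wstar - z)]
      have h6 := norm_eq_zero.mp h5
      rw [sub_eq_zero] at h6
      exact h6.symm
    have hw'_eq : w' = wstar := by
      have h1 : ⟪(w - η • F z) - w', wstar - w'⟫ ≤ 0 := (hiter2 t).2 wstar hwstar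
      rw [hww, hz_eq, sub_right_comm, inner_sub_left, real_inner_smul_left,
        real_inner_self_eq_norm_sq] at h1
      have h2 : (0:ℝ) ≤ ⟪F wstar, w' - wstar⟫ := hSVI w' hw'Z
      have h3 : ⟪F wstar, wstar - w'⟫ = -⟪F wstar, w' - wstar⟫ := by
        rw [← inner_neg_right, neg_sub]
      have h4 : ‖wstar - w'‖ ^ 2 ≤ 0 := by nlinarith
      have h5 : ‖wstar - w'‖ = 0 := by nlinarith [norm_nonneg (wstar - w')]
      have h6 := norm_eq_zero.mp h5
      rw [sub_eq_zero] at h6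
      exact h6.symm
    rw [hw'_eq, hww, sub_self]
    simp
  · -- main case
    have hAne : w - wstar ≠ 0 := sub_ne_zero.mpr hww
    have hApos : 0 < ‖w - wstar‖ := norm_pos_iff.mpr hAne
    -- μ ≤ L
    have hμL : μ ≤ L := by
      have hCS := real_inner_le_norm (F w - F wstar) (w - wstar)
      have hsm' := hsm w hwZ wstar hwstar
      have hlip' := hlip w hwZ wstar hwstar
      nlinarith [mul_pos hApos hApos, sq_nonneg ‖w - wstar‖]
    -- projection inequalities, rewritten
    have hP2 := (hiter2 t).2 wstar hwstar
    rw [sub_right_comm, inner_sub_left, real_inner_smul_left] at hP2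
    -- hP2 : ⟪w - w', wstar - w'⟫ - η * ⟪F z, wstar - w'⟫ ≤ 0
    have hP1 := (hiter1 t).2 w' hw'Z
    rw [sub_right_comm, inner_sub_left, real_inner_smul_left] at hP1
    -- hP1 : ⟪w - z, w' - z⟫ - η * ⟪F w, w' - z⟫ ≤ 0
    -- inner-product norm identities
    have id1 : 2 * ⟪w - w', wstar - w'⟫
        = ‖w - w'‖ ^ 2 + ‖wstar - w'‖ ^ 2 - ‖w - wstar‖ ^ 2 := by
      have h := two_inner_aux (w - w') (wstar - w')
      have e : (w - w') - (wstar - w') = w - wstar := by abel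
      rwa [e] at h
    have id2 : 2 * ⟪w - z, w' - z⟫
        = ‖w - z‖ ^ 2 + ‖w' - z‖ ^ 2 - ‖w - w'‖ ^ 2 := by
      have h := two_inner_aux (w - z) (w' - z)
      have e : (w - z) - (w' - z) = w - w' := by abel
      rwa [e] at h
    -- strong monotonicity + SVI at z
    have hF3 : μ * ‖z - wstar‖ ^ 2 ≤ ⟪F z, z - wstar⟫ := by
      have h1 := hsm z hzZ wstar hwstar
      have h2 := hSVI z hzZ
      rw [inner_sub_left] at h1
      linarith
    -- Cauchy-Schwarz + Lipschitz
    have hF4 : ⟪F z - F w, z - w'⟫ ≤ L * ‖w - z‖ * ‖w' - z‖ := by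
      have h1 := real_inner_le_norm (F z - F w) (z - w')
      have h2 : ‖F z - F w‖ ≤ L * ‖w - z‖ := by
        rw [norm_sub_rev]
        exact hlip w hwZ z hzZ
      have h3 : ‖z - w'‖ = ‖w' - z‖ := norm_sub_rev _ _
      rw [h3] at h1
      nlinarith [norm_nonneg (w' - z), norm_nonneg (F z - F w)]
    -- decomposition of the cross term
    have hF5 : η * ⟪F z, wstar - w'⟫
        = -(η * ⟪F z, z - wstar⟫) + η * ⟪F z - F w, z - w'⟫
          - η * ⟪F w, w' - z⟫ := by
      simp only [inner_sub_left, inner_sub_right]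
      ring
    have hm3 : η * (μ * ‖z - wstar‖ ^ 2) ≤ η * ⟪F z, z - wstar⟫ :=
      mul_le_mul_of_nonneg_left hF3 hη.le
    have hm4 : η * ⟪F z - F w, z - w'⟫ ≤ η * (L * ‖w - z‖ * ‖w' - z‖) :=
      mul_le_mul_of_nonneg_left hF4 hη.le
    have hq4 : η * (L * ‖w - z‖ * ‖w' - z‖) = (1/4) * (‖w - z‖ * ‖w' - z‖) := by
      rw [hηdef]; field_simp
    -- main one-step inequality
    have hG : ‖wstar - w'‖ ^ 2 ≤ ‖w - wstar‖ ^ 2 - ‖w - z‖ ^ 2 - ‖w' - z‖ ^ 2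
        + (1/2) * (‖w - z‖ * ‖w' - z‖) - 2 * (η * (μ * ‖z - wstar‖ ^ 2)) := by
      rw [hq4] at hm4
      linarith [hP2, hP1, id1, id2, hF5, hm3, hm4]
    -- triangle inequality : ‖w - w*‖² ≤ 2‖z - w*‖² + 2‖w - z‖²
    have hH : ‖w - wstar‖ ^ 2 ≤ 2 * ‖z - wstar‖ ^ 2 + 2 * ‖w - z‖ ^ 2 := by
      have htri : ‖w - wstar‖ ≤ ‖w - z‖ + ‖z - wstar‖ := by
        have h := norm_add_le (w - z) (z - wstar)
        rwa [sub_add_sub_cancel] at h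
      nlinarith [sq_nonneg (‖w - z‖ - ‖z - wstar‖), norm_nonneg (w - wstar),
        norm_nonneg (w - z), norm_nonneg (z - wstar)]
    -- finish
    have hkeq : μ / (4 * L) = η * μ := by rw [hηdef]; ring
    have hk1 : η * μ ≤ 1/4 := by
      rw [hηdef, div_mul_eq_mul_div, one_mul, div_le_iff₀ (by positivity)]
      linarith
    have hkpos : 0 ≤ η * μ := by positivity
    rw [hkeq, show ‖w' - wstar‖ = ‖wstar - w'‖ from norm_sub_rev _ _]
    linarith [hG, hH, sq_nonneg (‖w - z‖ - ‖w' - z‖),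
      mul_le_mul_of_nonneg_left hH hkpos,
      mul_nonneg (by linarith : (0:ℝ) ≤ 1/4 - η * μ) (sq_nonneg ‖w - z‖),
      sq_nonneg ‖w - z‖, sq_nonneg ‖w' - z‖]
end

section
/- Let F : Z → ℝ^d be L-Lipschitz on a convex set Z, let w ∈ Z be an ε-gap solution of SVI(F,Z) (max_{z∈Z}⟨F(w), w − z⟩ ≤ ε), let 0 < γ < 1/L, and let ŵ be the unique solution of SVI(F_w^γ, Z) where F_w^γ(z) = F(z) + (1/γ)(z − w). Then ‖w − ŵ‖ ≤ √(ε/(1/γ − L)). -/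
open RealInnerProductSpace

/-- If `w` is an `ε`-gap solution of `SVI(F,Z)` for an `L`-Lipschitz `F` and `ŵ` is the unique
solution of `SVI(F_w^γ, Z)` for `0 < γ < 1/L`, then `‖w - ŵ‖ ≤ √(ε/(1/γ - L))`. -/
theorem stmt14 {E : Type*} [NormedAddCommGroup E] [InnerProductSpace ℝ E]
    (Z : Set E) (hZ : Convex ℝ Z) (F : E → E) (L : ℝ) (hL : 0 < L)
    (hlip : ∀ z ∈ Z, ∀ z' ∈ Z, ‖F z - F z'‖ ≤ L * ‖z - z'‖)
    (ε : ℝ) (hε : 0 < ε)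
    (w : E) (hw : w ∈ Z)
    (hgap : ∀ z ∈ Z, ⟪F w, w - z⟫ ≤ ε)
    (γ : ℝ) (hγ0 : 0 < γ) (hγ : γ < 1 / L)
    (what : E) (hwhat : what ∈ Z)
    (hSVI : ∀ z ∈ Z, ⟪F what + (1 / γ) • (what - w), z - what⟫ ≥ 0) :
    ‖w - what‖ ≤ Real.sqrt (ε / (1 / γ - L)) := by
  have hc : 0 < 1 / γ - L := by
    have : L < 1 / γ := by
      rw [lt_div_iff₀ hγ0]
      calc L * γ < L * (1 / L) := by exact mul_lt_mul_of_pos_left hγ hL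
        _ = 1 := mul_one_div_cancel hL.ne'
    linarith
  set u := w - what with hu
  have h1 := hSVI w hw
  have h2 : (1 / γ) * ‖u‖ ^ 2 ≤ ⟪F what, u⟫ := by
    have hw2 : what - w = -u := by simp [hu]
    rw [inner_add_left, hw2, inner_smul_left, inner_neg_left,
      real_inner_self_eq_norm_sq] at h1
    simp only [starRingEnd_apply, star_trivial, ← hu] at h1
    nlinarith [h1]
  have h3 : ⟪F w, u⟫ ≤ ε := hgap what hwhat
  have h4 : ⟪F what - F w, u⟫ ≤ L * ‖u‖ ^ 2 := by
    calc ⟪F what - F w, u⟫ ≤ ‖F what - F w‖ * ‖u‖ := real_inner_le_norm _ _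
      _ ≤ (L * ‖what - w‖) * ‖u‖ := by
          have := hlip what hwhat w hw
          have hn : 0 ≤ ‖u‖ := norm_nonneg _
          nlinarith
      _ = L * ‖u‖ ^ 2 := by rw [norm_sub_rev]; ring
  have h5 : ⟪F what, u⟫ = ⟪F w, u⟫ + ⟪F what - F w, u⟫ := by
    rw [inner_sub_left]; ring
  have hkey : (1 / γ - L) * ‖u‖ ^ 2 ≤ ε := by nlinarith
  have hsq : ‖u‖ ^ 2 ≤ ε / (1 / γ - L) := by
    rw [le_div_iff₀ hc]; nlinarith
  exact (Real.le_sqrt (norm_nonneg u) (by positivity)).mpr hsq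
end
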